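/- For i ≥ 1 and j ≥ 0, let M_i(j) ⊆ (A // A(i))_* be the span of monomials of Brown-Gitler filtration exactly 2^{i+1} j. Then the map φ_i restricts to an isomorphism of ungraded F_2-vector spaces from M_i(j) onto the Brown-Gitler comodule N_{i-1}(j) ⊆ (A // A(i-1))_*. -/

import Mathlib

open TensorProduct

/-- The mod 2 dual Steenrod algebra on the conjugate generators:
`MvPolynomial.X k` represents `ξ̄_{k+1}`. -/
abbrev DualSteenrod : Type := MvPolynomial ℕ (ZMod 2)

/-- `xb k = ξ̄_k`, with `ξ̄_0 = 1`. -/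
noncomputable def xb : ℕ → DualSteenrod
  | 0 => 1
  | k + 1 => MvPolynomial.X k

/-- The Brown-Gitler weight of a monomial: `ξ̄_{k+1}` (variable `X k`) has weight
`2^k`. -/
def bgWeight (d : ℕ →₀ ℕ) : ℕ := d.sum fun k e => e * 2 ^ k

/-- Monomials of `(A ⫽ A(i))_*`: the exponent of `ξ̄_{k+1}` is divisible by
`2^{i+1-k}` (truncated subtraction). -/
def isAAmonomial (i : ℕ) (d : ℕ →₀ ℕ) : Prop := ∀ k, 2 ^ (i + 1 - k) ∣ d k

/-- The Brown-Gitler comodule `N_i(j) ⊆ (A ⫽ A(i))_*`: span of monomials of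
Brown-Gitler filtration at most `2^{i+1} j`. -/
noncomputable def BrownGitlerN (i j : ℕ) : Submodule (ZMod 2) DualSteenrod :=
  Submodule.span (ZMod 2)
    {m | ∃ d : ℕ →₀ ℕ, isAAmonomial i d ∧ bgWeight d ≤ 2 ^ (i + 1) * j ∧
      m = MvPolynomial.monomial d 1}

/-- `M_i(j) ⊆ (A ⫽ A(i))_*`: span of monomials of Brown-Gitler filtration exactly
`2^{i+1} j`. -/
noncomputable def BrownGitlerM (i j : ℕ) : Submodule (ZMod 2) DualSteenrod :=
  Submodule.span (ZMod 2)
    {m | ∃ d : ℕ →₀ ℕ, isAAmonomial i d ∧ bgWeight d = 2 ^ (i + 1) * j ∧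
      m = MvPolynomial.monomial d 1}

/-- The ungraded ring map `φ_i`, `ξ̄_k ↦ ξ̄_{k-1}` (so `ξ̄_k^{2^l} ↦ ξ̄_{k-1}^{2^l}`
for `k > 1` and `ξ̄_1^{2^l} ↦ 1`). -/
noncomputable def phi : DualSteenrod →ₐ[ZMod 2] DualSteenrod :=
  MvPolynomial.aeval fun k => xb k

/-! ### Auxiliary machinery -/

/-- Shift exponents down: `(shiftE d) k = d (k+1)`. -/
noncomputable def shiftE (d : ℕ →₀ ℕ) : ℕ →₀ ℕ :=
  Finsupp.comapDomain Nat.succ d Nat.succ_injective.injOn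

@[simp] lemma shiftE_apply (d : ℕ →₀ ℕ) (k : ℕ) : shiftE d k = d (k + 1) := rfl

lemma shiftE_add (d d' : ℕ →₀ ℕ) : shiftE (d + d') = shiftE d + shiftE d' := by
  ext k; simp

lemma shiftE_single_zero (b : ℕ) : shiftE (Finsupp.single 0 b) = 0 := by
  ext k; simp [Finsupp.single_apply]

lemma shiftE_single_succ (m b : ℕ) :
    shiftE (Finsupp.single (m + 1) b) = Finsupp.single m b := by
  ext k; simp only [shiftE_apply, Finsupp.single_apply]
  by_cases h : m = k <;> simp [h]

/-- Shift exponents up: `(unshiftE e) 0 = 0`, `(unshiftE e) (k+1) = e k`. -/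
noncomputable def unshiftE (e : ℕ →₀ ℕ) : ℕ →₀ ℕ :=
  Finsupp.embDomain ⟨Nat.succ, Nat.succ_injective⟩ e

@[simp] lemma unshiftE_zero (e : ℕ →₀ ℕ) : unshiftE e 0 = 0 := by
  refine Finsupp.embDomain_notin_range _ _ _ ?_
  rintro ⟨k, hk⟩
  exact Nat.succ_ne_zero k hk

@[simp] lemma unshiftE_succ (e : ℕ →₀ ℕ) (k : ℕ) : unshiftE e (k + 1) = e k :=
  Finsupp.embDomain_apply_self ⟨Nat.succ, Nat.succ_injective⟩ e k

lemma shiftE_unshiftE (e : ℕ →₀ ℕ) : shiftE (unshiftE e) = e := by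
  ext k; simp

lemma phi_monomial_single (a b : ℕ) :
    phi (MvPolynomial.monomial (Finsupp.single a b) 1) =
      MvPolynomial.monomial (shiftE (Finsupp.single a b)) 1 := by
  rw [← MvPolynomial.X_pow_eq_monomial, map_pow]
  cases a with
  | zero =>
    simp [phi, xb, shiftE_single_zero]
  | succ m =>
    simp [phi, xb, shiftE_single_succ, MvPolynomial.X_pow_eq_monomial]

lemma phi_monomial (d : ℕ →₀ ℕ) :
    phi (MvPolynomial.monomial d 1) = MvPolynomial.monomial (shiftE d) 1 := by
  induction d using Finsupp.induction with
  | zero => simp [phi, shiftE]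
  | single_add a b f ha hb ih =>
    have h1 : MvPolynomial.monomial (Finsupp.single a b + f) (1 : ZMod 2) =
        MvPolynomial.monomial (Finsupp.single a b) 1 * MvPolynomial.monomial f 1 := by
      rw [MvPolynomial.monomial_mul, one_mul]
    rw [h1, map_mul, ih, phi_monomial_single, shiftE_add,
      MvPolynomial.monomial_mul, one_mul]

lemma bgWeight_zero : bgWeight 0 = 0 := by simp [bgWeight]

lemma bgWeight_add (d d' : ℕ →₀ ℕ) : bgWeight (d + d') = bgWeight d + bgWeight d' :=
  Finsupp.sum_add_index' (by simp) (by intro a b c; ring)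

lemma bgWeight_single (a b : ℕ) : bgWeight (Finsupp.single a b) = b * 2 ^ a :=
  Finsupp.sum_single_index (by simp)

lemma bgWeight_shift (d : ℕ →₀ ℕ) : bgWeight d = d 0 + 2 * bgWeight (shiftE d) := by
  induction d using Finsupp.induction with
  | zero => simp [bgWeight, shiftE]
  | single_add a b f ha hb ih =>
    rw [bgWeight_add, shiftE_add, bgWeight_add, bgWeight_single]
    cases a with
    | zero =>
      rw [shiftE_single_zero, bgWeight_zero]
      have h0 : ((Finsupp.single 0 b + f : ℕ →₀ ℕ)) 0 = b + f 0 := by simp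
      rw [h0]
      simp only [pow_zero, mul_one]
      omega
    | succ m =>
      rw [shiftE_single_succ, bgWeight_single]
      have h0 : ((Finsupp.single (m + 1) b + f : ℕ →₀ ℕ)) 0 = f 0 := by
        simp [Finsupp.single_apply]
      have h1 : b * 2 ^ (m + 1) = 2 * (b * 2 ^ m) := by rw [pow_succ]; ring
      rw [h0, h1]
      omega

lemma pow_dvd_bgWeight (i : ℕ) (e : ℕ →₀ ℕ) (h : ∀ k, 2 ^ (i - k) ∣ e k) :
    2 ^ i ∣ bgWeight e := by
  unfold bgWeight Finsupp.sum
  refine Finset.dvd_sum fun k _ => ?_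
  show (2 : ℕ) ^ i ∣ e k * 2 ^ k
  rcases le_or_gt k i with hk | hk
  · have h2 : (2 : ℕ) ^ i = 2 ^ (i - k) * 2 ^ k := by
      rw [← pow_add]; congr 1; omega
    rw [h2]
    exact mul_dvd_mul (h k) dvd_rfl
  · exact dvd_trans (pow_dvd_pow 2 hk.le) (dvd_mul_left _ _)

/-- The inverse exponent map: restores the exponent of `ξ̄₁` from the weight. -/
noncomputable def gmap (i j : ℕ) (e : ℕ →₀ ℕ) : ℕ →₀ ℕ :=
  Finsupp.single 0 (2 ^ (i + 1) * j - 2 * bgWeight e) + unshiftE e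

@[simp] lemma gmap_zero_apply (i j : ℕ) (e : ℕ →₀ ℕ) :
    gmap i j e 0 = 2 ^ (i + 1) * j - 2 * bgWeight e := by
  simp [gmap]

@[simp] lemma gmap_succ_apply (i j : ℕ) (e : ℕ →₀ ℕ) (k : ℕ) :
    gmap i j e (k + 1) = e k := by
  simp [gmap, Finsupp.single_apply]

lemma shiftE_gmap (i j : ℕ) (e : ℕ →₀ ℕ) : shiftE (gmap i j e) = e := by
  ext k; simp

lemma gmap_shiftE (i j : ℕ) (d : ℕ →₀ ℕ) (hw : bgWeight d = 2 ^ (i + 1) * j) :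
    gmap i j (shiftE d) = d := by
  have h := bgWeight_shift d
  ext k
  cases k with
  | zero => rw [gmap_zero_apply]; omega
  | succ m => simp

/-- A linear left inverse of `phi` on `BrownGitlerM i j`. -/
noncomputable def psi (i j : ℕ) : DualSteenrod →ₗ[ZMod 2] DualSteenrod :=
  (MvPolynomial.basisMonomials ℕ (ZMod 2)).constr (ZMod 2)
    (fun e => (MvPolynomial.monomial (gmap i j e) (1 : ZMod 2) : DualSteenrod))

lemma psi_monomial (i j : ℕ) (d : ℕ →₀ ℕ) :
    psi i j (MvPolynomial.monomial d 1) = MvPolynomial.monomial (gmap i j d) 1 := by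
  unfold psi
  have h := (MvPolynomial.basisMonomials ℕ (ZMod 2)).constr_basis (ZMod 2)
    (fun e => (MvPolynomial.monomial (gmap i j e) (1 : ZMod 2) : DualSteenrod)) d
  rwa [show (MvPolynomial.basisMonomials ℕ (ZMod 2)) d = MvPolynomial.monomial d 1 from
    congrFun (MvPolynomial.coe_basisMonomials ℕ (ZMod 2)) d] at h

/-- for `i ≥ 1` and `j ≥ 0`, the map `φ_i` carries the subspace
`M_i(j)` isomorphically (as ungraded `F₂`-vector spaces) onto the Brown-Gitler
comodule `N_{i-1}(j) ⊆ (A ⫽ A(i-1))_*`: its image is `N_{i-1}(j)` and it is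
injective on `M_i(j)`. -/
theorem stmt6 (i : ℕ) (hi : 1 ≤ i) (j : ℕ) :
    Submodule.map phi.toLinearMap (BrownGitlerM i j) = BrownGitlerN (i - 1) j ∧
    ∀ x ∈ BrownGitlerM i j, phi x = 0 → x = 0 := by
  have hpow : (2 : ℕ) ^ (i + 1) = 2 * 2 ^ i := by rw [pow_succ]; ring
  have hi1 : i - 1 + 1 = i := by omega
  constructor
  · rw [BrownGitlerM, Submodule.map_span, BrownGitlerN]
    congr 1
    ext m
    constructor
    · rintro ⟨_, ⟨d, hd, hw, rfl⟩, rfl⟩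
      refine ⟨shiftE d, ?_, ?_, ?_⟩
      · intro k
        have := hd (k + 1)
        have he : i - 1 + 1 - k = i + 1 - (k + 1) := by omega
        rw [he]
        simpa using this
      · have h := bgWeight_shift d
        rw [hi1]
        have hw2 : bgWeight d = 2 * (2 ^ i * j) := by rw [hw, hpow]; ring
        omega
      · exact phi_monomial d
    · rintro ⟨e, he, hwe, rfl⟩
      rw [hi1] at hwe
      have hdvd : (2 : ℕ) ^ i ∣ bgWeight e := by
        refine pow_dvd_bgWeight i e fun k => ?_
        have := he k
        have hk : i - 1 + 1 - k = i - k := by omega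
        rwa [hk] at this
      refine ⟨MvPolynomial.monomial (gmap i j e) 1, ⟨gmap i j e, ?_, ?_, rfl⟩, ?_⟩
      · intro k
        cases k with
        | zero =>
          rw [gmap_zero_apply, Nat.sub_zero]
          refine Nat.dvd_sub (dvd_mul_right _ j) ?_
          rw [hpow]
          exact mul_dvd_mul_left 2 hdvd
        | succ m =>
          rw [gmap_succ_apply]
          have := he m
          have hk : i - 1 + 1 - m = i + 1 - (m + 1) := by omega
          rwa [hk] at this
      · have h := bgWeight_shift (gmap i j e)
        rw [shiftE_gmap, gmap_zero_apply] at h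
        have h2 : 2 ^ (i + 1) * j = 2 * (2 ^ i * j) := by rw [hpow]; ring
        omega
      · show phi (MvPolynomial.monomial (gmap i j e) 1) = MvPolynomial.monomial e 1
        rw [phi_monomial, shiftE_gmap]
  · intro x hx h0
    have key : ∀ y ∈ BrownGitlerM i j, psi i j (phi y) = y := by
      intro y hy
      refine Submodule.span_induction ?_ ?_ ?_ ?_ hy
      · rintro m ⟨d, hd, hw, rfl⟩
        rw [phi_monomial, psi_monomial, gmap_shiftE i j d hw]
      · simp
      · intro a b _ _ ha hb
        rw [map_add, map_add, ha, hb]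
      · intro c a _ ha
        rw [map_smul, map_smul, ha]
    have := key x hx
    rw [h0, map_zero] at this
    exact this.symm
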